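/- Let G' and G'' be graphs on disjoint node sets, each having at least two ports. Let p' be a port of G' with unique incident edge {p', v'}, and let p'' be a port of G'' with unique incident edge {p'', v''}. Let G = (G' \ {{p', v'}}) ∪ (G'' \ {{p'', v''}}) ∪ { {v', v''} }, the graph obtained by removing the two ports p' and p'' and identifying their incident edges into the single edge {v', v''}. Then G is omniconjugated if and only if both G' and G'' are omniconjugated. -/

import Mathlib

open scoped symmDiff

namespace Kekule

abbrev Node := ℕ
abbrev Graph := Finset (Finset Node)

/-- `G` is a graph: every edge is a 2-element set of nodes. -/
def IsGraph (G : Graph) : Prop := ∀ e ∈ G, e.card = 2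

/-- The nodes of a graph: the elements of its edges. -/
def nodes (G : Graph) : Finset Node := G.biUnion id

/-- The number of edges of `G` containing `v`. -/
def deg (G : Graph) (v : Node) : ℕ := (G.filter (fun e => v ∈ e)).card

/-- A port is a node contained in exactly one edge. -/
def ports (G : Graph) : Finset Node := (nodes G).filter (fun v => deg G v = 1)

/-- An internal node is a node that is not a port. -/
def internal (G : Graph) : Finset Node := (nodes G).filter (fun v => deg G v ≠ 1)

/-- A Kekulé state of `G`: a subgraph `W ⊆ G` such that every internal node
of `G` lies in exactly one edge of `W`. -/
def IsKekule (G W : Graph) : Prop := W ⊆ G ∧ ∀ v ∈ internal G, deg W v = 1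

/-- A curve in `G`: a subgraph `C ⊆ G` such that every node of `C` that is
internal in `G` lies in exactly two edges of `C`. -/
def IsCurve (G C : Graph) : Prop :=
  C ⊆ G ∧ ∀ v ∈ nodes C, v ∈ internal G → deg C v = 2

/-- `(C, W)` is an alternating curve in `G`: both are subgraphs of `G`,
`C` is a curve in `G`, and `W ∩ C` is a Kekulé state of `C`. -/
def IsAlternating (G C W : Graph) : Prop :=
  W ⊆ G ∧ IsCurve G C ∧ IsKekule C (W ∩ C)

/-- `W|P`: the set of ports in `P` that lie in some edge of `W`. -/
def rest (W : Graph) (P : Finset Node) : Finset Node := P ∩ nodes W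

/-- The set of Kekulé port assignments of `G`. -/
def KP (G : Graph) : Set (Finset Node) :=
  {g | ∃ W, IsKekule G W ∧ rest W (ports G) = g}

/-- A cell `K` over `P` is a Kekulé cell if it is the set of Kekulé port
assignments of some graph with port set `P`. -/
def IsKekuleCell (P : Finset Node) (K : Set (Finset Node)) : Prop :=
  ∃ G, IsGraph G ∧ ports G = P ∧ KP G = K

/-- A channel: a 2-element subset of `P`. -/
def IsChannel (P : Finset Node) (c : Finset Node) : Prop := c ⊆ P ∧ c.card = 2

/-- A port `p` is flexible for a cell `K`. -/
def Flexible (K : Set (Finset Node)) (p : Node) : Prop :=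
  ∃ g ∈ K, ∃ g' ∈ K, p ∈ g ∧ p ∉ g'

/-- Hamming distance between two port assignments. -/
def hdist (k k' : Finset Node) : ℕ := (k ∆ k').card

/-- The Hamming diameter of `K` equals `n`. -/
def HamDiamEq (K : Set (Finset Node)) (n : ℕ) : Prop :=
  (∃ k ∈ K, ∃ k' ∈ K, hdist k k' = n) ∧ ∀ k ∈ K, ∀ k' ∈ K, hdist k k' ≤ n

/-- `G` is connected: nonempty, and any two distinct nodes are joined by a walk. -/
def Connected (G : Graph) : Prop :=
  G.Nonempty ∧ ∀ p ∈ nodes G, ∀ q ∈ nodes G, p ≠ q →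
    ∃ (n : ℕ) (f : ℕ → Node), f 0 = p ∧ f n = q ∧
      ∀ i < n, ({f i, f (i + 1)} : Finset Node) ∈ G

/-- `C` is a simple path between `p` and `q`. -/
def IsSimplePath (C : Graph) (p q : Node) : Prop :=
  Connected C ∧ ports C = {p, q} ∧
    ∀ v ∈ nodes C, v ≠ p → v ≠ q → deg C v = 2

/-- A cycle: a connected graph all of whose nodes lie in exactly two edges. -/
def IsCycle (C : Graph) : Prop :=
  Connected C ∧ ∀ v ∈ nodes C, deg C v = 2

/-- A semi-Kekulé state of `G`: every internal node of `G` lies in an odd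
number of edges of `W`. -/
def IsSemiKekule (G W : Graph) : Prop :=
  W ⊆ G ∧ ∀ v ∈ internal G, deg W v % 2 = 1

/-- The signature of `G`. -/
def sig (G : Graph) : ℕ := (internal G).card % 2

/-- `G` is omniconjugated. -/
def Omniconjugated (G : Graph) : Prop :=
  2 ≤ (ports G).card ∧ KP G = {g | g ⊆ ports G ∧ g.card % 2 = sig G}

instance : Std.Commutative (α := Finset Node) (· ∆ ·) := ⟨symmDiff_comm⟩
instance : Std.Associative (α := Finset Node) (· ∆ ·) := ⟨symmDiff_assoc⟩

/-- The `⊕`-sum of a finite family of port assignments. -/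
def xorSum (D : Finset (Finset Node)) : Finset Node := D.fold (· ∆ ·) ∅ id

/-! ### Auxiliary lemmas -/

lemma mem_nodes {H : Graph} {v : Node} : v ∈ nodes H ↔ ∃ e ∈ H, v ∈ e := by
  simp [nodes]

lemma deg_ne_zero {H : Graph} {v : Node} : v ∈ nodes H ↔ deg H v ≠ 0 := by
  rw [mem_nodes, deg, Ne, Finset.card_eq_zero, ← Finset.not_nonempty_iff_eq_empty,
    not_not, Finset.filter_nonempty_iff]

lemma deg_mono {A B : Graph} (h : A ⊆ B) (v : Node) : deg A v ≤ deg B v :=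
  Finset.card_le_card (Finset.filter_subset_filter _ h)

lemma deg_eq_zero {A : Graph} {v : Node} (h : v ∉ nodes A) : deg A v = 0 := by
  by_contra hc
  exact h (deg_ne_zero.mpr hc)

lemma deg_union {A B : Graph} (h : Disjoint A B) (v : Node) :
    deg (A ∪ B) v = deg A v + deg B v := by
  unfold deg
  rw [Finset.filter_union, Finset.card_union_of_disjoint (Finset.disjoint_filter_filter h)]

lemma deg_singleton (e : Finset Node) (v : Node) :
    deg {e} v = if v ∈ e then 1 else 0 := by
  simp only [deg, Finset.filter_singleton]
  split <;> simp

lemma deg_empty (v : Node) : deg ∅ v = 0 := rfl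

lemma mem_ports {H : Graph} {v : Node} : v ∈ ports H ↔ deg H v = 1 := by
  constructor
  · intro h
    exact (Finset.mem_filter.1 h).2
  · intro h
    exact Finset.mem_filter.2 ⟨deg_ne_zero.mpr (by omega), h⟩

lemma mem_internal {H : Graph} {v : Node} :
    v ∈ internal H ↔ deg H v ≠ 0 ∧ deg H v ≠ 1 := by
  constructor
  · intro h
    obtain ⟨h1, h2⟩ := Finset.mem_filter.1 h
    exact ⟨deg_ne_zero.mp h1, h2⟩
  · intro ⟨h1, h2⟩
    exact Finset.mem_filter.2 ⟨deg_ne_zero.mpr h1, h2⟩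

lemma edge_subset_nodes {H : Graph} {e : Finset Node} (he : e ∈ H) : e ⊆ nodes H :=
  fun v hv => mem_nodes.mpr ⟨e, he, hv⟩

lemma rest_subset (W : Graph) (P : Finset Node) : rest W P ⊆ P :=
  Finset.inter_subset_left

lemma mem_rest {W : Graph} {P : Finset Node} {v : Node} :
    v ∈ rest W P ↔ v ∈ P ∧ deg W v ≠ 0 := by
  rw [rest, Finset.mem_inter, deg_ne_zero]

lemma graph_disjoint {A B : Graph} (hA : IsGraph A) (h : Disjoint (nodes A) (nodes B)) :
    Disjoint A B := by
  rw [Finset.disjoint_left]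
  intro e heA heB
  have hc : e.card = 2 := hA e heA
  have : e.Nonempty := Finset.card_pos.mp (by omega)
  obtain ⟨x, hx⟩ := this
  exact Finset.disjoint_left.1 h (edge_subset_nodes heA hx) (edge_subset_nodes heB hx)

lemma split_union {A B C D P Q : Finset Node} (hPQ : Disjoint P Q)
    (hA : A ⊆ P) (hB : B ⊆ Q) (hC : C ⊆ P) (hD : D ⊆ Q)
    (h : A ∪ B = C ∪ D) : A = C ∧ B = D := by
  have key : ∀ (X Y Z T : Finset Node), X ⊆ P → Y ⊆ Q → Z ⊆ P → T ⊆ Q →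
      X ∪ Y = Z ∪ T → X ⊆ Z := by
    intro X Y Z T hX hY hZ hT heq x hx
    have : x ∈ Z ∪ T := by rw [← heq]; exact Finset.mem_union_left _ hx
    rcases Finset.mem_union.1 this with h' | h'
    · exact h'
    · exact absurd (hT h') (Finset.disjoint_left.1 hPQ (hX hx))
  have key' : ∀ (X Y Z T : Finset Node), X ⊆ P → Y ⊆ Q → Z ⊆ P → T ⊆ Q →
      X ∪ Y = Z ∪ T → Y ⊆ T := by
    intro X Y Z T hX hY hZ hT heq y hy
    have : y ∈ Z ∪ T := by rw [← heq]; exact Finset.mem_union_right _ hy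
    rcases Finset.mem_union.1 this with h' | h'
    · exact absurd (hZ h') (Finset.disjoint_right.1 hPQ (hY hy))
    · exact h'
  exact ⟨Finset.Subset.antisymm (key A B C D hA hB hC hD h) (key C D A B hC hD hA hB h.symm),
    Finset.Subset.antisymm (key' A B C D hA hB hC hD h) (key' C D A B hC hD hA hB h.symm)⟩

lemma kekule_parity {H W : Graph} (hH : IsGraph H) (hK : IsKekule H W) :
    (rest W (ports H)).card % 2 = sig H := by
  obtain ⟨hWH, hdeg⟩ := hK
  have hsum : ∑ v ∈ nodes H, deg W v = 2 * W.card := by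
    calc ∑ v ∈ nodes H, deg W v
        = ∑ v ∈ nodes H, ∑ e ∈ W, if v ∈ e then 1 else 0 := by
          refine Finset.sum_congr rfl fun v _ => ?_
          rw [deg, Finset.card_filter]
      _ = ∑ e ∈ W, ∑ v ∈ nodes H, if v ∈ e then 1 else 0 := Finset.sum_comm
      _ = ∑ e ∈ W, e.card := by
          refine Finset.sum_congr rfl fun e he => ?_
          rw [← Finset.card_filter]
          congr 1
          rw [Finset.filter_mem_eq_inter, Finset.inter_eq_right.mpr
            (edge_subset_nodes (hWH he))]
      _ = ∑ _e ∈ W, 2 := Finset.sum_congr rfl fun e he => hH e (hWH he)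
      _ = 2 * W.card := by rw [Finset.sum_const, smul_eq_mul, mul_comm]
  have hnodes : nodes H = internal H ∪ ports H := by
    rw [internal, ports]
    ext v
    simp only [Finset.mem_union, Finset.mem_filter]
    tauto
  have hdisjip : Disjoint (internal H) (ports H) := by
    rw [Finset.disjoint_left]
    intro v hvi hvp
    exact (Finset.mem_filter.1 hvi).2 (Finset.mem_filter.1 hvp).2
  rw [hnodes, Finset.sum_union hdisjip] at hsum
  have hint : ∑ v ∈ internal H, deg W v = (internal H).card := by
    rw [Finset.sum_congr rfl (fun v hv => hdeg v hv), Finset.sum_const, smul_eq_mul, mul_one]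
  have hport : ∑ v ∈ ports H, deg W v = (rest W (ports H)).card := by
    have step : ∀ v ∈ ports H, deg W v = if v ∈ nodes W then 1 else 0 := by
      intro v hv
      have h1 : deg W v ≤ 1 := by
        have := deg_mono hWH v
        rw [mem_ports.1 hv] at this
        exact this
      split
      · next h => have := deg_ne_zero.1 h; omega
      · next h => exact deg_eq_zero h
    rw [Finset.sum_congr rfl step, Finset.sum_ite_mem, Finset.sum_const, smul_eq_mul, mul_one,
      rest]
  rw [hint, hport] at hsum
  rw [sig]
  omega

/-- Bundled context for the gluing construction. -/
structure Glue where
  G₁ : Graph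
  G₂ : Graph
  p₁ : Node
  v₁ : Node
  p₂ : Node
  v₂ : Node
  G : Graph
  hg₁ : IsGraph G₁
  hg₂ : IsGraph G₂
  hdisj : Disjoint (nodes G₁) (nodes G₂)
  h2₁ : 2 ≤ (ports G₁).card
  h2₂ : 2 ≤ (ports G₂).card
  hp₁ : p₁ ∈ ports G₁
  he₁ : ({p₁, v₁} : Finset Node) ∈ G₁
  hp₂ : p₂ ∈ ports G₂
  he₂ : ({p₂, v₂} : Finset Node) ∈ G₂
  hG : G = ((G₁ \ {({p₁, v₁} : Finset Node)}) ∪ (G₂ \ {({p₂, v₂} : Finset Node)})) ∪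
    {({v₁, v₂} : Finset Node)}

namespace Glue

variable (c : Glue)

def e₁ : Finset Node := {c.p₁, c.v₁}
def e₂ : Finset Node := {c.p₂, c.v₂}
def br : Finset Node := {c.v₁, c.v₂}

lemma hGe : c.G = ((c.G₁ \ {c.e₁}) ∪ (c.G₂ \ {c.e₂})) ∪ {c.br} := c.hG

def swap : Glue where
  G₁ := c.G₂
  G₂ := c.G₁
  p₁ := c.p₂
  v₁ := c.v₂
  p₂ := c.p₁
  v₂ := c.v₁
  G := c.G
  hg₁ := c.hg₂
  hg₂ := c.hg₁
  hdisj := c.hdisj.symm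
  h2₁ := c.h2₂
  h2₂ := c.h2₁
  hp₁ := c.hp₂
  he₁ := c.he₂
  hp₂ := c.hp₁
  he₂ := c.he₁
  hG := by
    rw [c.hG, Finset.union_comm (c.G₁ \ _), Finset.pair_comm c.v₁ c.v₂]

lemma ne₁ : c.p₁ ≠ c.v₁ := by
  have h := c.hg₁ _ c.he₁
  intro h'
  rw [h'] at h
  simp at h

lemma p₁_mem : c.p₁ ∈ nodes c.G₁ :=
  edge_subset_nodes c.he₁ (Finset.mem_insert_self _ _)

lemma v₁_mem : c.v₁ ∈ nodes c.G₁ :=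
  edge_subset_nodes c.he₁ (by simp [Finset.mem_insert])

lemma notin₂ {a : Node} (h : a ∈ nodes c.G₁) : a ∉ nodes c.G₂ :=
  Finset.disjoint_left.1 c.hdisj h

lemma deg₁p₁ : deg c.G₁ c.p₁ = 1 := mem_ports.1 c.hp₁

lemma ne_p₁p₂ : c.p₁ ≠ c.p₂ := fun h => c.notin₂ c.p₁_mem (h ▸ c.swap.p₁_mem)

lemma ne_p₁v₂ : c.p₁ ≠ c.v₂ := fun h => c.notin₂ c.p₁_mem (h ▸ c.swap.v₁_mem)

lemma ne_v₁p₂ : c.v₁ ≠ c.p₂ := fun h => c.notin₂ c.v₁_mem (h ▸ c.swap.p₁_mem)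

lemma ne_v₁v₂ : c.v₁ ≠ c.v₂ := fun h => c.notin₂ c.v₁_mem (h ▸ c.swap.v₁_mem)

lemma eq_e₁ {e : Finset Node} (he : e ∈ c.G₁) (hp : c.p₁ ∈ e) : e = c.e₁ := by
  have h1 : deg c.G₁ c.p₁ = 1 := c.deg₁p₁
  rw [deg] at h1
  exact Finset.card_le_one.1 (le_of_eq h1) e (Finset.mem_filter.2 ⟨he, hp⟩)
    c.e₁ (Finset.mem_filter.2 ⟨c.he₁, Finset.mem_insert_self _ _⟩)

lemma br_notin₁ : c.br ∉ c.G₁ := fun h =>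
  c.notin₂ (edge_subset_nodes h (show c.v₂ ∈ c.br by simp [br])) c.swap.v₁_mem

lemma e₂_notin₁ : c.e₂ ∉ c.G₁ := fun h =>
  c.notin₂ (edge_subset_nodes h (Finset.mem_insert_self _ _)) c.swap.p₁_mem

lemma p₁_notin_e₂ : c.p₁ ∉ c.e₂ := by
  simp only [e₂, Finset.mem_insert, Finset.mem_singleton]
  push_neg
  exact ⟨c.ne_p₁p₂, c.ne_p₁v₂⟩

lemma p₁_notin_br : c.p₁ ∉ c.br := by
  simp only [br, Finset.mem_insert, Finset.mem_singleton]
  push_neg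
  exact ⟨c.ne₁, c.ne_p₁v₂⟩

lemma e₁_notin_G : c.e₁ ∉ c.G := by
  rw [c.hGe]
  intro h
  rcases Finset.mem_union.1 h with h | h
  · rcases Finset.mem_union.1 h with h | h
    · exact (Finset.mem_sdiff.1 h).2 (Finset.mem_singleton_self _)
    · exact c.swap.e₂_notin₁ (Finset.mem_sdiff.1 h).1
  · exact c.p₁_notin_br ((Finset.mem_singleton.1 h) ▸ Finset.mem_insert_self _ _)

lemma br_mem_G : c.br ∈ c.G := by
  rw [c.hGe]
  exact Finset.mem_union_right _ (Finset.mem_singleton_self _)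

lemma disj₁₂ : Disjoint c.G₁ c.G₂ := graph_disjoint c.hg₁ c.hdisj

lemma deg_G (v : Node) : deg c.G v =
    (if v = c.p₁ then 0 else deg c.G₁ v) + (if v = c.p₂ then 0 else deg c.G₂ v) := by
  have hdA : Disjoint (c.G₁ \ {c.e₁}) (c.G₂ \ {c.e₂}) :=
    Finset.disjoint_of_subset_left Finset.sdiff_subset
      (Finset.disjoint_of_subset_right Finset.sdiff_subset c.disj₁₂)
  have hdB : Disjoint ((c.G₁ \ {c.e₁}) ∪ (c.G₂ \ {c.e₂})) {c.br} := by
    rw [Finset.disjoint_singleton_right]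
    simp only [Finset.mem_union, Finset.mem_sdiff, not_or]
    exact ⟨fun h => c.br_notin₁ h.1, fun h => c.swap.br_notin₁ (by
      rw [show c.swap.br = c.br from Finset.pair_comm c.v₂ c.v₁]; exact h.1)⟩
  have hLHS : deg c.G v = deg (c.G₁ \ {c.e₁}) v + deg (c.G₂ \ {c.e₂}) v +
      (if v ∈ c.br then 1 else 0) := by
    rw [c.hGe, deg_union hdB, deg_union hdA, deg_singleton]
  have h1 : deg c.G₁ v = deg (c.G₁ \ {c.e₁}) v + (if v ∈ c.e₁ then 1 else 0) := by
    conv_lhs => rw [← Finset.sdiff_union_of_subset (Finset.singleton_subset_iff.2 c.he₁)]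
    rw [deg_union Finset.sdiff_disjoint, deg_singleton]
    rfl
  have h2 : deg c.G₂ v = deg (c.G₂ \ {c.e₂}) v + (if v ∈ c.e₂ then 1 else 0) := by
    conv_lhs => rw [← Finset.sdiff_union_of_subset (Finset.singleton_subset_iff.2 c.he₂)]
    rw [deg_union Finset.sdiff_disjoint, deg_singleton]
    rfl
  rcases eq_or_ne v c.p₁ with rfl | hvp₁
  · have hz2 : deg c.G₂ c.p₁ = 0 := deg_eq_zero (fun h => c.notin₂ c.p₁_mem h)
    have hz2' : deg (c.G₂ \ {c.e₂}) c.p₁ = 0 := by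
      have := deg_mono (Finset.sdiff_subset (s := c.G₂) (t := {c.e₂})) c.p₁
      omega
    have he : c.p₁ ∈ c.e₁ := Finset.mem_insert_self _ _
    rw [if_pos rfl, if_pos he] at *
    have hbr : c.p₁ ∉ c.br := c.p₁_notin_br
    rw [if_neg hbr] at hLHS
    have hd1 : deg c.G₁ c.p₁ = 1 := c.deg₁p₁
    split <;> omega
  · rcases eq_or_ne v c.p₂ with rfl | hvp₂
    · have hz1 : deg c.G₁ c.p₂ = 0 := deg_eq_zero (fun h => c.notin₂ h c.swap.p₁_mem)
      have hz1' : deg (c.G₁ \ {c.e₁}) c.p₂ = 0 := by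
        have := deg_mono (Finset.sdiff_subset (s := c.G₁) (t := {c.e₁})) c.p₂
        omega
      have he : c.p₂ ∈ c.e₂ := Finset.mem_insert_self _ _
      rw [if_pos he] at h2
      have hbr : c.p₂ ∉ c.br := by
        simp only [br, Finset.mem_insert, Finset.mem_singleton]
        push_neg
        exact ⟨c.ne_v₁p₂.symm, c.swap.ne₁⟩
      rw [if_neg hbr] at hLHS
      have hd2 : deg c.G₂ c.p₂ = 1 := c.swap.deg₁p₁
      rw [if_neg hvp₁, if_pos rfl]
      omega
    · rw [if_neg hvp₁, if_neg hvp₂]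
      rcases eq_or_ne v c.v₁ with rfl | hvv₁
      · have hz2 : deg c.G₂ c.v₁ = 0 := deg_eq_zero (fun h => c.notin₂ c.v₁_mem h)
        have hz2' : deg (c.G₂ \ {c.e₂}) c.v₁ = 0 := by
          have := deg_mono (Finset.sdiff_subset (s := c.G₂) (t := {c.e₂})) c.v₁
          omega
        have he : c.v₁ ∈ c.e₁ := by simp [e₁, Finset.mem_insert]
        have hbr : c.v₁ ∈ c.br := Finset.mem_insert_self _ _
        rw [if_pos he] at h1
        rw [if_pos hbr] at hLHS
        omega
      · rcases eq_or_ne v c.v₂ with rfl | hvv₂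
        · have hz1 : deg c.G₁ c.v₂ = 0 := deg_eq_zero (fun h => c.notin₂ h c.swap.v₁_mem)
          have hz1' : deg (c.G₁ \ {c.e₁}) c.v₂ = 0 := by
            have := deg_mono (Finset.sdiff_subset (s := c.G₁) (t := {c.e₁})) c.v₂
            omega
          have he : c.v₂ ∈ c.e₂ := by simp [e₂, Finset.mem_insert]
          have hbr : c.v₂ ∈ c.br := by simp [br, Finset.mem_insert]
          rw [if_pos he] at h2
          rw [if_pos hbr] at hLHS
          omega
        · have he1 : v ∉ c.e₁ := by
            simp only [e₁, Finset.mem_insert, Finset.mem_singleton]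
            push_neg
            exact ⟨hvp₁, hvv₁⟩
          have he2 : v ∉ c.e₂ := by
            simp only [e₂, Finset.mem_insert, Finset.mem_singleton]
            push_neg
            exact ⟨hvp₂, hvv₂⟩
          have hbr : v ∉ c.br := by
            simp only [br, Finset.mem_insert, Finset.mem_singleton]
            push_neg
            exact ⟨hvv₁, hvv₂⟩
          rw [if_neg he1] at h1
          rw [if_neg he2] at h2
          rw [if_neg hbr] at hLHS
          omega

lemma deg_G_p₁ : deg c.G c.p₁ = 0 := by
  rw [c.deg_G, if_pos rfl]
  split
  · rfl
  · rw [deg_eq_zero (fun h => c.notin₂ c.p₁_mem h)]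

lemma ports_G : ports c.G = (ports c.G₁ \ {c.p₁}) ∪ (ports c.G₂ \ {c.p₂}) := by
  ext q
  simp only [Finset.mem_union, Finset.mem_sdiff, Finset.mem_singleton, mem_ports]
  rw [c.deg_G q]
  have hnb : deg c.G₁ q = 0 ∨ deg c.G₂ q = 0 := by
    by_cases h : q ∈ nodes c.G₁
    · exact Or.inr (deg_eq_zero (c.notin₂ h))
    · exact Or.inl (deg_eq_zero h)
  have h1 : deg c.G₁ c.p₁ = 1 := c.deg₁p₁
  have h2 : deg c.G₂ c.p₂ = 1 := c.swap.deg₁p₁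
  have hz1 : deg c.G₁ c.p₂ = 0 := deg_eq_zero (fun h => c.notin₂ h c.swap.p₁_mem)
  have hz2 : deg c.G₂ c.p₁ = 0 := deg_eq_zero (fun h => c.notin₂ c.p₁_mem h)
  split_ifs with ha hb hb
  · exact absurd (ha.symm.trans hb) c.ne_p₁p₂
  · subst ha
    apply iff_of_false
    · omega
    · rintro (⟨_, hne⟩ | ⟨hd, _⟩)
      · exact hne rfl
      · omega
  · subst hb
    apply iff_of_false
    · omega
    · rintro (⟨hd, _⟩ | ⟨_, hne⟩)
      · omega
      · exact hne rfl
  · constructor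
    · intro h
      rcases hnb with h0 | h0
      · right; exact ⟨by omega, hb⟩
      · left; exact ⟨by omega, ha⟩
    · rintro (⟨hd, _⟩ | ⟨hd, _⟩) <;> omega

lemma internal_G : internal c.G = internal c.G₁ ∪ internal c.G₂ := by
  ext q
  simp only [Finset.mem_union, mem_internal]
  rw [c.deg_G q]
  have hnb : deg c.G₁ q = 0 ∨ deg c.G₂ q = 0 := by
    by_cases h : q ∈ nodes c.G₁
    · exact Or.inr (deg_eq_zero (c.notin₂ h))
    · exact Or.inl (deg_eq_zero h)
  have h1 : deg c.G₁ c.p₁ = 1 := c.deg₁p₁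
  have h2 : deg c.G₂ c.p₂ = 1 := c.swap.deg₁p₁
  have hz1 : deg c.G₁ c.p₂ = 0 := deg_eq_zero (fun h => c.notin₂ h c.swap.p₁_mem)
  have hz2 : deg c.G₂ c.p₁ = 0 := deg_eq_zero (fun h => c.notin₂ c.p₁_mem h)
  split_ifs with ha hb hb
  · exact absurd (ha.symm.trans hb) c.ne_p₁p₂
  · subst ha
    apply iff_of_false
    · rintro ⟨hx, _⟩; omega
    · rintro (⟨_, h2'⟩ | ⟨h1', _⟩)
      · exact h2' h1
      · exact h1' hz2
  · subst hb
    apply iff_of_false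
    · rintro ⟨hx, _⟩; omega
    · rintro (⟨h1', _⟩ | ⟨_, h2'⟩)
      · exact h1' hz1
      · exact h2' h2
  · constructor
    · rintro ⟨hx, hy⟩
      rcases hnb with h0 | h0
      · right; exact ⟨by omega, by omega⟩
      · left; exact ⟨by omega, by omega⟩
    · rintro (⟨h1', h2'⟩ | ⟨h1', h2'⟩) <;> exact ⟨by omega, by omega⟩

lemma sig_G : sig c.G = (sig c.G₁ + sig c.G₂) % 2 := by
  have hd : Disjoint (internal c.G₁) (internal c.G₂) :=
    Finset.disjoint_of_subset_left (Finset.filter_subset _ _)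
      (Finset.disjoint_of_subset_right (Finset.filter_subset _ _) c.hdisj)
  rw [sig, c.internal_G, Finset.card_union_of_disjoint hd, sig, sig]
  omega

lemma disj_ports : Disjoint (ports c.G₁) (ports c.G₂) :=
  Finset.disjoint_of_subset_left (Finset.filter_subset _ _)
    (Finset.disjoint_of_subset_right (Finset.filter_subset _ _) c.hdisj)

lemma port_rest {W : Graph} (hW : W ⊆ c.G₁) :
    c.p₁ ∈ rest W (ports c.G₁) ↔ c.e₁ ∈ W := by
  rw [mem_rest]
  constructor
  · rintro ⟨_, hd⟩
    obtain ⟨e, heW, hpe⟩ := mem_nodes.1 (deg_ne_zero.mpr hd)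
    exact (c.eq_e₁ (hW heW) hpe) ▸ heW
  · intro h
    exact ⟨c.hp₁, deg_ne_zero.1 (mem_nodes.2 ⟨c.e₁, h, Finset.mem_insert_self _ _⟩)⟩

lemma internal_ne_p₁ {v : Node} (hv : v ∈ internal c.G₁) :
    v ∈ nodes c.G₁ ∧ v ≠ c.p₁ := by
  obtain ⟨h0, h1⟩ := mem_internal.1 hv
  exact ⟨deg_ne_zero.2 h0, fun h => h1 (by rw [h]; exact c.deg₁p₁)⟩

lemma br_notin₂ : c.br ∉ c.G₂ := by
  have := c.swap.br_notin₁
  rwa [show c.swap.br = c.br from Finset.pair_comm c.v₂ c.v₁] at this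

section Core

variable {W₁ W₂ W : Graph}

lemma core_subset (h₁ : W₁ ⊆ c.G₁) (h₂ : W₂ ⊆ c.G₂)
    (hWdef : W = ((W₁ \ {c.e₁}) ∪ (W₂ \ {c.e₂})) ∪ (if c.e₁ ∈ W₁ then {c.br} else ∅)) :
    W ⊆ c.G := by
  rw [hWdef, c.hGe]
  refine Finset.union_subset_union (Finset.union_subset_union ?_ ?_) ?_
  · exact Finset.sdiff_subset_sdiff h₁ (Finset.Subset.refl _)
  · exact Finset.sdiff_subset_sdiff h₂ (Finset.Subset.refl _)
  · split
    · exact Finset.Subset.refl _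
    · exact Finset.empty_subset _

lemma hWdef_swap (h₁ : W₁ ⊆ c.G₁) (h₂ : W₂ ⊆ c.G₂) (hm : c.e₁ ∈ W₁ ↔ c.e₂ ∈ W₂)
    (hWdef : W = ((W₁ \ {c.e₁}) ∪ (W₂ \ {c.e₂})) ∪ (if c.e₁ ∈ W₁ then {c.br} else ∅)) :
    W = ((W₂ \ {c.e₂}) ∪ (W₁ \ {c.e₁})) ∪
      (if c.e₂ ∈ W₂ then {({c.v₂, c.v₁} : Finset Node)} else ∅) := by
  rw [hWdef, Finset.union_comm (W₁ \ _)]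
  congr 1
  by_cases h : c.e₁ ∈ W₁
  · rw [if_pos h, if_pos (hm.1 h),
      show ({c.v₂, c.v₁} : Finset Node) = c.br from Finset.pair_comm c.v₂ c.v₁]
  · rw [if_neg h, if_neg (fun h2 => h (hm.2 h2))]

lemma core_deg (h₁ : W₁ ⊆ c.G₁) (h₂ : W₂ ⊆ c.G₂)
    (hWdef : W = ((W₁ \ {c.e₁}) ∪ (W₂ \ {c.e₂})) ∪ (if c.e₁ ∈ W₁ then {c.br} else ∅)) :
    ∀ v ∈ nodes c.G₁, v ≠ c.p₁ → deg W v = deg W₁ v := by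
  intro v hv hvp
  have hdA : Disjoint (W₁ \ {c.e₁}) (W₂ \ {c.e₂}) :=
    Finset.disjoint_of_subset_left (Finset.sdiff_subset.trans h₁)
      (Finset.disjoint_of_subset_right (Finset.sdiff_subset.trans h₂) c.disj₁₂)
  have hdB : Disjoint ((W₁ \ {c.e₁}) ∪ (W₂ \ {c.e₂})) (if c.e₁ ∈ W₁ then {c.br} else ∅) := by
    rw [Finset.disjoint_right]
    intro e he
    split at he
    · rw [Finset.mem_singleton] at he
      subst he
      simp only [Finset.mem_union, Finset.mem_sdiff, not_or]
      exact ⟨fun h => c.br_notin₁ (h₁ h.1), fun h => c.br_notin₂ (h₂ h.1)⟩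
    · simp at he
  have hW : deg W v = deg (W₁ \ {c.e₁}) v + deg (W₂ \ {c.e₂}) v +
      deg (if c.e₁ ∈ W₁ then {c.br} else ∅) v := by
    rw [hWdef, deg_union hdB, deg_union hdA]
  have hd1 : deg W₁ v = deg (W₁ \ {c.e₁}) v + (if c.e₁ ∈ W₁ ∧ v ∈ c.e₁ then 1 else 0) := by
    by_cases he : c.e₁ ∈ W₁
    · conv_lhs => rw [← Finset.sdiff_union_of_subset (Finset.singleton_subset_iff.2 he)]
      rw [deg_union Finset.sdiff_disjoint, deg_singleton]
      simp [he]
    · rw [((Finset.sdiff_singleton_eq_erase _ _).trans (Finset.erase_eq_of_notMem he))]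
      simp [he]
  have hz : deg (W₂ \ {c.e₂}) v = 0 := by
    have h0 : deg c.G₂ v = 0 := deg_eq_zero (c.notin₂ hv)
    have := deg_mono ((Finset.sdiff_subset (s := W₂) (t := {c.e₂})).trans h₂) v
    omega
  have hite : deg (if c.e₁ ∈ W₁ then {c.br} else ∅) v =
      (if c.e₁ ∈ W₁ ∧ v ∈ c.br then 1 else 0) := by
    by_cases he : c.e₁ ∈ W₁
    · rw [if_pos he, deg_singleton]
      simp [he]
    · rw [if_neg he, deg_empty]
      simp [he]
  have hbe : (v ∈ c.br) ↔ (v ∈ c.e₁) := by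
    have hvv₂ : v ≠ c.v₂ := fun h => c.notin₂ hv (h ▸ c.swap.v₁_mem)
    simp only [br, e₁, Finset.mem_insert, Finset.mem_singleton]
    simp [hvp, hvv₂]
  simp only [hbe] at hite
  omega

lemma core_rest (h₁ : W₁ ⊆ c.G₁) (h₂ : W₂ ⊆ c.G₂)
    (hWdef : W = ((W₁ \ {c.e₁}) ∪ (W₂ \ {c.e₂})) ∪ (if c.e₁ ∈ W₁ then {c.br} else ∅)) :
    rest W (ports c.G) ∩ ports c.G₁ = rest W₁ (ports c.G₁) \ {c.p₁} := by
  ext q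
  simp only [Finset.mem_inter, mem_rest, Finset.mem_sdiff, Finset.mem_singleton]
  constructor
  · rintro ⟨⟨hqG, hdW⟩, hq₁⟩
    have hqp : q ≠ c.p₁ := by
      intro h
      subst h
      rw [mem_ports, c.deg_G_p₁] at hqG
      exact absurd hqG (by omega)
    have hqn : q ∈ nodes c.G₁ := Finset.filter_subset _ _ hq₁
    rw [c.core_deg h₁ h₂ hWdef q hqn hqp] at hdW
    exact ⟨⟨hq₁, hdW⟩, hqp⟩
  · rintro ⟨⟨hq₁, hdW₁⟩, hqp⟩
    have hqn : q ∈ nodes c.G₁ := Finset.filter_subset _ _ hq₁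
    refine ⟨⟨?_, ?_⟩, hq₁⟩
    · rw [c.ports_G]
      exact Finset.mem_union_left _ (Finset.mem_sdiff.2 ⟨hq₁, by simpa using hqp⟩)
    · rw [c.core_deg h₁ h₂ hWdef q hqn hqp]
      exact hdW₁

lemma core_rest_full (h₁ : W₁ ⊆ c.G₁) (h₂ : W₂ ⊆ c.G₂) (hm : c.e₁ ∈ W₁ ↔ c.e₂ ∈ W₂)
    (hWdef : W = ((W₁ \ {c.e₁}) ∪ (W₂ \ {c.e₂})) ∪ (if c.e₁ ∈ W₁ then {c.br} else ∅)) :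
    rest W (ports c.G) =
      (rest W₁ (ports c.G₁) \ {c.p₁}) ∪ (rest W₂ (ports c.G₂) \ {c.p₂}) := by
  have hsub : rest W (ports c.G) ⊆ ports c.G₁ ∪ ports c.G₂ := by
    intro q hq
    have := rest_subset W (ports c.G) hq
    rw [c.ports_G] at this
    rcases Finset.mem_union.1 this with h | h
    · exact Finset.mem_union_left _ (Finset.sdiff_subset h)
    · exact Finset.mem_union_right _ (Finset.sdiff_subset h)
  have hkey : rest W (ports c.G) =
      (rest W (ports c.G) ∩ ports c.G₁) ∪ (rest W (ports c.G) ∩ ports c.G₂) := by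
    rw [← Finset.inter_union_distrib_left, Finset.inter_eq_left.2 hsub]
  have hx : rest W (ports c.G) ∩ ports c.G₂ = rest W₂ (ports c.G₂) \ {c.p₂} :=
    c.swap.core_rest h₂ h₁ (c.hWdef_swap h₁ h₂ hm hWdef)
  rw [hkey, c.core_rest h₁ h₂ hWdef, hx]

lemma compose (h₁ : IsKekule c.G₁ W₁) (h₂ : IsKekule c.G₂ W₂)
    (hm : c.e₁ ∈ W₁ ↔ c.e₂ ∈ W₂) :
    ∃ W, IsKekule c.G W ∧ rest W (ports c.G) =
      (rest W₁ (ports c.G₁) \ {c.p₁}) ∪ (rest W₂ (ports c.G₂) \ {c.p₂}) := by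
  set W := ((W₁ \ {c.e₁}) ∪ (W₂ \ {c.e₂})) ∪ (if c.e₁ ∈ W₁ then {c.br} else ∅) with hWdef
  have hWdefs : W = ((W₂ \ {c.swap.e₁}) ∪ (W₁ \ {c.swap.e₂})) ∪
      (if c.swap.e₁ ∈ W₂ then {c.swap.br} else ∅) :=
    c.hWdef_swap h₁.1 h₂.1 hm hWdef
  refine ⟨W, ⟨c.core_subset h₁.1 h₂.1 hWdef, ?_⟩,
    c.core_rest_full h₁.1 h₂.1 hm hWdef⟩
  intro v hv
  rw [c.internal_G, Finset.mem_union] at hv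
  rcases hv with hv | hv
  · obtain ⟨hvn, hvp⟩ := c.internal_ne_p₁ hv
    rw [c.core_deg h₁.1 h₂.1 hWdef v hvn hvp]
    exact h₁.2 v hv
  · obtain ⟨hvn, hvp⟩ := c.swap.internal_ne_p₁ hv
    rw [c.swap.core_deg h₂.1 h₁.1 hWdefs v hvn hvp]
    exact h₂.2 v hv

lemma decompose (hK : IsKekule c.G W) :
    ∃ W₁ W₂, IsKekule c.G₁ W₁ ∧ IsKekule c.G₂ W₂ ∧
      (c.p₁ ∈ rest W₁ (ports c.G₁) ↔ c.p₂ ∈ rest W₂ (ports c.G₂)) ∧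
      rest W (ports c.G) =
        (rest W₁ (ports c.G₁) \ {c.p₁}) ∪ (rest W₂ (ports c.G₂) \ {c.p₂}) := by
  obtain ⟨hWG, hdeg⟩ := hK
  set W₁ := (W ∩ c.G₁) ∪ (if c.br ∈ W then {c.e₁} else ∅) with hW₁
  set W₂ := (W ∩ c.G₂) ∪ (if c.br ∈ W then {c.e₂} else ∅) with hW₂
  have h₁ : W₁ ⊆ c.G₁ := by
    rw [hW₁]
    refine Finset.union_subset Finset.inter_subset_right ?_
    split
    · exact Finset.singleton_subset_iff.2 c.he₁
    · exact Finset.empty_subset _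
  have h₂ : W₂ ⊆ c.G₂ := by
    rw [hW₂]
    refine Finset.union_subset Finset.inter_subset_right ?_
    split
    · exact Finset.singleton_subset_iff.2 c.he₂
    · exact Finset.empty_subset _
  have he₁W : c.e₁ ∉ W := fun h => c.e₁_notin_G (hWG h)
  have he₂W : c.e₂ ∉ W := fun h => c.swap.e₁_notin_G (hWG h)
  have hbr₁ : c.e₁ ∈ W₁ ↔ c.br ∈ W := by
    rw [hW₁]
    simp only [Finset.mem_union, Finset.mem_inter]
    constructor
    · rintro (⟨h, _⟩ | h)
      · exact absurd h he₁W
      · split at h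
        · assumption
        · simp at h
    · intro h
      right
      rw [if_pos h]
      exact Finset.mem_singleton_self _
  have hbr₂ : c.e₂ ∈ W₂ ↔ c.br ∈ W := by
    rw [hW₂]
    simp only [Finset.mem_union, Finset.mem_inter]
    constructor
    · rintro (⟨h, _⟩ | h)
      · exact absurd h he₂W
      · split at h
        · assumption
        · simp at h
    · intro h
      right
      rw [if_pos h]
      exact Finset.mem_singleton_self _
  have hm : c.e₁ ∈ W₁ ↔ c.e₂ ∈ W₂ := hbr₁.trans hbr₂.symm
  have hA : W₁ \ {c.e₁} = W ∩ c.G₁ := by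
    rw [hW₁, Finset.union_sdiff_distrib,
      ((Finset.sdiff_singleton_eq_erase _ _).trans (Finset.erase_eq_of_notMem (fun h => he₁W (Finset.mem_inter.1 h).1)))]
    have h2 : (if c.br ∈ W then ({c.e₁} : Graph) else ∅) \ {c.e₁} = ∅ := by
      split <;> simp
    rw [h2, Finset.union_empty]
  have hB : W₂ \ {c.e₂} = W ∩ c.G₂ := by
    rw [hW₂, Finset.union_sdiff_distrib,
      ((Finset.sdiff_singleton_eq_erase _ _).trans (Finset.erase_eq_of_notMem (fun h => he₂W (Finset.mem_inter.1 h).1)))]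
    have h2 : (if c.br ∈ W then ({c.e₂} : Graph) else ∅) \ {c.e₂} = ∅ := by
      split <;> simp
    rw [h2, Finset.union_empty]
  have hWdef : W = ((W₁ \ {c.e₁}) ∪ (W₂ \ {c.e₂})) ∪ (if c.e₁ ∈ W₁ then {c.br} else ∅) := by
    rw [hA, hB]
    have hite : (if c.e₁ ∈ W₁ then ({c.br} : Graph) else ∅) = W ∩ {c.br} := by
      by_cases h : c.br ∈ W
      · rw [if_pos (hbr₁.2 h), Finset.inter_singleton_of_mem h]
      · rw [if_neg (fun h' => h (hbr₁.1 h')), eq_comm, Finset.inter_singleton_of_notMem h]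
    rw [hite, ← Finset.inter_union_distrib_left, ← Finset.inter_union_distrib_left,
      eq_comm, Finset.inter_eq_left]
    refine hWG.trans ?_
    rw [c.hGe]
    refine Finset.union_subset_union (Finset.union_subset_union ?_ ?_) (Finset.Subset.refl _)
    · exact Finset.sdiff_subset
    · exact Finset.sdiff_subset
  have hWdefs : W = ((W₂ \ {c.swap.e₁}) ∪ (W₁ \ {c.swap.e₂})) ∪
      (if c.swap.e₁ ∈ W₂ then {c.swap.br} else ∅) :=
    c.hWdef_swap h₁ h₂ hm hWdef
  have hk₁ : IsKekule c.G₁ W₁ := by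
    refine ⟨h₁, fun v hv => ?_⟩
    obtain ⟨hvn, hvp⟩ := c.internal_ne_p₁ hv
    rw [← c.core_deg h₁ h₂ hWdef v hvn hvp]
    exact hdeg v (by rw [c.internal_G]; exact Finset.mem_union_left _ hv)
  have hk₂ : IsKekule c.G₂ W₂ := by
    refine ⟨h₂, fun v hv => ?_⟩
    obtain ⟨hvn, hvp⟩ := c.swap.internal_ne_p₁ hv
    rw [← c.swap.core_deg h₂ h₁ hWdefs v hvn hvp]
    exact hdeg v (by rw [c.internal_G]; exact Finset.mem_union_right _ hv)
  refine ⟨W₁, W₂, hk₁, hk₂, ?_, c.core_rest_full h₁ h₂ hm hWdef⟩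
  have hpr₂ : c.p₂ ∈ rest W₂ (ports c.G₂) ↔ c.e₂ ∈ W₂ := c.swap.port_rest h₂
  exact (c.port_rest h₁).trans (hm.trans hpr₂.symm)

end Core

lemma isGraph_G : IsGraph c.G := by
  intro e he
  rw [c.hGe] at he
  rcases Finset.mem_union.1 he with h | h
  · rcases Finset.mem_union.1 h with h' | h'
    · exact c.hg₁ e (Finset.sdiff_subset h')
    · exact c.hg₂ e (Finset.sdiff_subset h')
  · rw [Finset.mem_singleton.1 h]
    exact Finset.card_pair c.ne_v₁v₂

lemma sig_le : sig c.G₂ ≤ 1 := by rw [sig]; omega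

lemma sig_le₁ : sig c.G₁ ≤ 1 := by rw [sig]; omega

lemma omni_aux (hO : Omniconjugated c.G) {g D : Finset Node} (hsub : g ⊆ ports c.G₁)
    (hDsub : D ⊆ ports c.G₂) (hp₂D : c.p₂ ∉ D)
    (hparh : ((g \ {c.p₁}) ∪ D).card % 2 = sig c.G) :
    ∃ W₁ W₂, IsKekule c.G₁ W₁ ∧ IsKekule c.G₂ W₂ ∧
      (c.p₁ ∈ rest W₁ (ports c.G₁) ↔ c.p₂ ∈ rest W₂ (ports c.G₂)) ∧
      rest W₁ (ports c.G₁) \ {c.p₁} = g \ {c.p₁} ∧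
      rest W₂ (ports c.G₂) \ {c.p₂} = D := by
  have hsubG : (g \ {c.p₁}) ∪ D ⊆ ports c.G := by
    rw [c.ports_G]
    refine Finset.union_subset_union (Finset.sdiff_subset_sdiff hsub (Finset.Subset.refl _)) ?_
    intro x hx
    exact Finset.mem_sdiff.2 ⟨hDsub hx, fun hxx => hp₂D ((Finset.mem_singleton.1 hxx) ▸ hx)⟩
  have hmem : (g \ {c.p₁}) ∪ D ∈ KP c.G := by rw [hO.2]; exact ⟨hsubG, hparh⟩
  obtain ⟨W, hWk, hWr⟩ := hmem
  obtain ⟨W₁, W₂, hk₁, hk₂, hiff, hre⟩ := c.decompose hWk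
  have heq : (rest W₁ (ports c.G₁) \ {c.p₁}) ∪ (rest W₂ (ports c.G₂) \ {c.p₂}) =
      (g \ {c.p₁}) ∪ D := hre.symm.trans hWr
  obtain ⟨e1, e2⟩ := split_union c.disj_ports
    (Finset.sdiff_subset.trans (rest_subset _ _)) (Finset.sdiff_subset.trans (rest_subset _ _))
    (Finset.sdiff_subset.trans hsub) hDsub heq
  exact ⟨W₁, W₂, hk₁, hk₂, hiff, e1, e2⟩

lemma omni_split (hO : Omniconjugated c.G) : Omniconjugated c.G₁ := by
  refine ⟨c.h2₁, Set.eq_of_subset_of_subset ?_ ?_⟩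
  · rintro g ⟨W, hW, rfl⟩
    exact ⟨rest_subset _ _, kekule_parity c.hg₁ hW⟩
  · rintro g ⟨hsub, hpar⟩
    obtain ⟨q₂, hq₂p, hq₂ne⟩ :=
      Finset.exists_mem_ne (lt_of_lt_of_le one_lt_two c.h2₂) c.p₂
    have hsig₁ : sig c.G₁ ≤ 1 := c.sig_le₁
    have hsig₂ : sig c.G₂ ≤ 1 := c.sig_le
    have hsG := c.sig_G
    by_cases hpg : c.p₁ ∈ g
    · have hDsub : (if sig c.G₂ = 0 then ({q₂} : Finset Node) else ∅) ⊆ ports c.G₂ := by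
        split
        · exact Finset.singleton_subset_iff.2 hq₂p
        · exact Finset.empty_subset _
      have hp₂D : c.p₂ ∉ (if sig c.G₂ = 0 then ({q₂} : Finset Node) else ∅) := by
        split
        · exact fun h => hq₂ne (Finset.mem_singleton.1 h).symm
        · simp
      have hDcard : (if sig c.G₂ = 0 then ({q₂} : Finset Node) else ∅).card % 2 =
          (sig c.G₂ + 1) % 2 := by
        split
        · next h0 => simp [h0]
        · next h0 => simp; omega
      have hgc : (g \ {c.p₁}).card = g.card - 1 := by
        rw [Finset.card_sdiff_of_subset (Finset.singleton_subset_iff.2 hpg), Finset.card_singleton]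
      have hg1 : 1 ≤ g.card := Finset.card_pos.2 ⟨_, hpg⟩
      have hdd : Disjoint (g \ {c.p₁}) (if sig c.G₂ = 0 then ({q₂} : Finset Node) else ∅) :=
        Finset.disjoint_of_subset_left (Finset.sdiff_subset.trans hsub)
          (Finset.disjoint_of_subset_right hDsub c.disj_ports)
      have hparh : ((g \ {c.p₁}) ∪ (if sig c.G₂ = 0 then ({q₂} : Finset Node) else ∅)).card % 2 =
          sig c.G := by
        rw [Finset.card_union_of_disjoint hdd]
        omega
      obtain ⟨W₁, W₂, hk₁, hk₂, hiff, e1, e2⟩ := c.omni_aux hO hsub hDsub hp₂D hparh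
      have hpar₂ := kekule_parity c.hg₂ hk₂
      have hp₂r : c.p₂ ∈ rest W₂ (ports c.G₂) := by
        by_contra hn
        rw [((Finset.sdiff_singleton_eq_erase _ _).trans (Finset.erase_eq_of_notMem hn))] at e2
        rw [e2] at hpar₂
        omega
      have hp₁r : c.p₁ ∈ rest W₁ (ports c.G₁) := hiff.2 hp₂r
      refine ⟨W₁, hk₁, ?_⟩
      have hres : rest W₁ (ports c.G₁) \ {c.p₁} ∪ {c.p₁} = rest W₁ (ports c.G₁) :=
        Finset.sdiff_union_of_subset (Finset.singleton_subset_iff.2 hp₁r)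
      rw [← hres, e1, Finset.sdiff_union_of_subset (Finset.singleton_subset_iff.2 hpg)]
    · have hDsub : (if sig c.G₂ = 0 then (∅ : Finset Node) else {q₂}) ⊆ ports c.G₂ := by
        split
        · exact Finset.empty_subset _
        · exact Finset.singleton_subset_iff.2 hq₂p
      have hp₂D : c.p₂ ∉ (if sig c.G₂ = 0 then (∅ : Finset Node) else {q₂}) := by
        split
        · simp
        · exact fun h => hq₂ne (Finset.mem_singleton.1 h).symm
      have hDcard : (if sig c.G₂ = 0 then (∅ : Finset Node) else {q₂}).card % 2 =
          sig c.G₂ := by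
        split
        · next h0 => simp [h0]
        · next h0 => simp; omega
      have hgs : g \ {c.p₁} = g := ((Finset.sdiff_singleton_eq_erase _ _).trans (Finset.erase_eq_of_notMem hpg))
      have hdd : Disjoint (g \ {c.p₁}) (if sig c.G₂ = 0 then (∅ : Finset Node) else {q₂}) :=
        Finset.disjoint_of_subset_left (Finset.sdiff_subset.trans hsub)
          (Finset.disjoint_of_subset_right hDsub c.disj_ports)
      have hparh : ((g \ {c.p₁}) ∪ (if sig c.G₂ = 0 then (∅ : Finset Node) else {q₂})).card % 2 =
          sig c.G := by
        rw [Finset.card_union_of_disjoint hdd, hgs]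
        omega
      obtain ⟨W₁, W₂, hk₁, hk₂, hiff, e1, e2⟩ := c.omni_aux hO hsub hDsub hp₂D hparh
      have hpar₂ := kekule_parity c.hg₂ hk₂
      have hp₂r : c.p₂ ∉ rest W₂ (ports c.G₂) := by
        intro hn
        have hcsd : (rest W₂ (ports c.G₂) \ {c.p₂}).card = (rest W₂ (ports c.G₂)).card - 1 := by
          rw [Finset.card_sdiff_of_subset (Finset.singleton_subset_iff.2 hn), Finset.card_singleton]
        have h1le : 1 ≤ (rest W₂ (ports c.G₂)).card := Finset.card_pos.2 ⟨_, hn⟩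
        rw [e2] at hcsd
        omega
      have hp₁r : c.p₁ ∉ rest W₁ (ports c.G₁) := fun h => hp₂r (hiff.1 h)
      refine ⟨W₁, hk₁, ?_⟩
      rw [← ((Finset.sdiff_singleton_eq_erase _ _).trans (Finset.erase_eq_of_notMem hp₁r)), e1, hgs]

lemma omni_glue (h₁ : Omniconjugated c.G₁) (h₂ : Omniconjugated c.G₂) :
    Omniconjugated c.G := by
  have hdsd : Disjoint (ports c.G₁ \ {c.p₁}) (ports c.G₂ \ {c.p₂}) :=
    Finset.disjoint_of_subset_left Finset.sdiff_subset
      (Finset.disjoint_of_subset_right Finset.sdiff_subset c.disj_ports)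
  have hcard : 2 ≤ (ports c.G).card := by
    rw [c.ports_G, Finset.card_union_of_disjoint hdsd]
    have c1 : (ports c.G₁ \ {c.p₁}).card = (ports c.G₁).card - 1 := by
      rw [Finset.card_sdiff_of_subset (Finset.singleton_subset_iff.2 c.hp₁), Finset.card_singleton]
    have c2 : (ports c.G₂ \ {c.p₂}).card = (ports c.G₂).card - 1 := by
      rw [Finset.card_sdiff_of_subset (Finset.singleton_subset_iff.2 c.hp₂), Finset.card_singleton]
    have := c.h2₁
    have := c.h2₂
    omega
  refine ⟨hcard, Set.eq_of_subset_of_subset ?_ ?_⟩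
  · rintro g ⟨W, hW, rfl⟩
    exact ⟨rest_subset _ _, kekule_parity c.isGraph_G hW⟩
  · rintro g ⟨hsub, hpar⟩
    have hsig₁ : sig c.G₁ ≤ 1 := c.sig_le₁
    have hsig₂ : sig c.G₂ ≤ 1 := c.sig_le
    have hsG := c.sig_G
    have hgu : g = (g ∩ ports c.G₁) ∪ (g ∩ ports c.G₂) := by
      rw [← Finset.inter_union_distrib_left, eq_comm, Finset.inter_eq_left]
      intro x hx
      have hx' := hsub hx
      rw [c.ports_G] at hx'
      rcases Finset.mem_union.1 hx' with h | h
      · exact Finset.mem_union_left _ (Finset.sdiff_subset h)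
      · exact Finset.mem_union_right _ (Finset.sdiff_subset h)
    have hp₁g : c.p₁ ∉ g := by
      intro h
      have := hsub h
      rw [c.ports_G] at this
      rcases Finset.mem_union.1 this with h' | h'
      · exact (Finset.mem_sdiff.1 h').2 (Finset.mem_singleton_self _)
      · exact c.notin₂ c.p₁_mem (Finset.filter_subset _ _ (Finset.mem_sdiff.1 h').1)
    have hp₂g : c.p₂ ∉ g := by
      intro h
      have := hsub h
      rw [c.ports_G] at this
      rcases Finset.mem_union.1 this with h' | h'
      · exact c.notin₂ (Finset.filter_subset _ _ (Finset.mem_sdiff.1 h').1) c.swap.p₁_mem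
      · exact (Finset.mem_sdiff.1 h').2 (Finset.mem_singleton_self _)
    have hp₁g₁ : c.p₁ ∉ g ∩ ports c.G₁ := fun h => hp₁g (Finset.mem_inter.1 h).1
    have hp₂g₂ : c.p₂ ∉ g ∩ ports c.G₂ := fun h => hp₂g (Finset.mem_inter.1 h).1
    have hdisjg : Disjoint (g ∩ ports c.G₁) (g ∩ ports c.G₂) :=
      Finset.disjoint_of_subset_left Finset.inter_subset_right
        (Finset.disjoint_of_subset_right Finset.inter_subset_right c.disj_ports)
    have hcardg : g.card = (g ∩ ports c.G₁).card + (g ∩ ports c.G₂).card := by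
      conv_lhs => rw [hgu]
      rw [Finset.card_union_of_disjoint hdisjg]
    by_cases hc : (g ∩ ports c.G₁).card % 2 = sig c.G₁
    · have hc₂ : (g ∩ ports c.G₂).card % 2 = sig c.G₂ := by omega
      have hm₁ : (g ∩ ports c.G₁) ∈ KP c.G₁ := by
        rw [h₁.2]; exact ⟨Finset.inter_subset_right, hc⟩
      have hm₂ : (g ∩ ports c.G₂) ∈ KP c.G₂ := by
        rw [h₂.2]; exact ⟨Finset.inter_subset_right, hc₂⟩
      obtain ⟨V₁, hV₁, hr₁⟩ := hm₁
      obtain ⟨V₂, hV₂, hr₂⟩ := hm₂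
      have hpr₂ : c.p₂ ∈ rest V₂ (ports c.G₂) ↔ c.e₂ ∈ V₂ := c.swap.port_rest hV₂.1
      have hn₁ : c.e₁ ∉ V₁ := fun h => hp₁g₁ (hr₁ ▸ (c.port_rest hV₁.1).2 h)
      have hn₂ : c.e₂ ∉ V₂ := fun h => hp₂g₂ (hr₂ ▸ hpr₂.2 h)
      obtain ⟨W, hWk, hWr⟩ := c.compose hV₁ hV₂ (iff_of_false hn₁ hn₂)
      refine ⟨W, hWk, ?_⟩
      rw [hWr, hr₁, hr₂, ((Finset.sdiff_singleton_eq_erase _ _).trans (Finset.erase_eq_of_notMem hp₁g₁)),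
        ((Finset.sdiff_singleton_eq_erase _ _).trans (Finset.erase_eq_of_notMem hp₂g₂)), ← hgu]
    · have hc₂ : (g ∩ ports c.G₂).card % 2 ≠ sig c.G₂ := by omega
      have hm₁ : insert c.p₁ (g ∩ ports c.G₁) ∈ KP c.G₁ := by
        rw [h₁.2]
        refine ⟨Finset.insert_subset c.hp₁ Finset.inter_subset_right, ?_⟩
        rw [Finset.card_insert_of_notMem hp₁g₁]
        omega
      have hm₂ : insert c.p₂ (g ∩ ports c.G₂) ∈ KP c.G₂ := by
        rw [h₂.2]
        refine ⟨Finset.insert_subset c.hp₂ Finset.inter_subset_right, ?_⟩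
        rw [Finset.card_insert_of_notMem hp₂g₂]
        omega
      obtain ⟨V₁, hV₁, hr₁⟩ := hm₁
      obtain ⟨V₂, hV₂, hr₂⟩ := hm₂
      have hpr₂ : c.p₂ ∈ rest V₂ (ports c.G₂) ↔ c.e₂ ∈ V₂ := c.swap.port_rest hV₂.1
      have hy₁ : c.e₁ ∈ V₁ :=
        (c.port_rest hV₁.1).1 (by rw [hr₁]; exact Finset.mem_insert_self _ _)
      have hy₂ : c.e₂ ∈ V₂ :=
        hpr₂.1 (by rw [hr₂]; exact Finset.mem_insert_self _ _)
      obtain ⟨W, hWk, hWr⟩ := c.compose hV₁ hV₂ (iff_of_true hy₁ hy₂)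
      refine ⟨W, hWk, ?_⟩
      rw [hWr, hr₁, hr₂, Finset.insert_sdiff_of_mem _ (Finset.mem_singleton_self c.p₁),
        Finset.insert_sdiff_of_mem _ (Finset.mem_singleton_self c.p₂),
        ((Finset.sdiff_singleton_eq_erase _ _).trans (Finset.erase_eq_of_notMem hp₁g₁)), ((Finset.sdiff_singleton_eq_erase _ _).trans (Finset.erase_eq_of_notMem hp₂g₂)), ← hgu]

end Glue

/-- Glueing two graphs by removing a port of each and
identifying the two incident edges yields an omniconjugated graph if and only
if both constituents are omniconjugated. -/
theorem statement19 (G' G'' : Graph) (hG' : IsGraph G') (hG'' : IsGraph G'')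
    (hdisj : Disjoint (nodes G') (nodes G''))
    (h2' : 2 ≤ (ports G').card) (h2'' : 2 ≤ (ports G'').card)
    (p' v' : Node) (hp' : p' ∈ ports G') (hpv' : ({p', v'} : Finset Node) ∈ G')
    (p'' v'' : Node) (hp'' : p'' ∈ ports G'') (hpv'' : ({p'', v''} : Finset Node) ∈ G'')
    (G : Graph)
    (hG : G = ((G' \ {({p', v'} : Finset Node)}) ∪ (G'' \ {({p'', v''} : Finset Node)})) ∪
      {({v', v''} : Finset Node)}) :
    Omniconjugated G ↔ Omniconjugated G' ∧ Omniconjugated G'' := by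
  let c : Glue := ⟨G', G'', p', v', p'', v'', G, hG', hG'', hdisj, h2', h2'', hp', hpv',
    hp'', hpv'', hG⟩
  constructor
  · intro h
    exact ⟨c.omni_split h, c.swap.omni_split h⟩
  · rintro ⟨h1, h2⟩
    exact c.omni_glue h1 h2
end Kekule
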